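/- Let the vertices of the nondegenerate triangle P1P2P3 be counted counterclockwise and let P* = (x*, y*) lie strictly inside the triangle P1P2P3. Then the weights m1* = |P*P1|·det[[1,1,1],[x*,x2,x3],[y*,y2,y3]], m2* = |P*P2|·det[[1,1,1],[x1,x*,x3],[y1,y*,y3]], m3* = |P*P3|·det[[1,1,1],[x1,x2,x*],[y1,y2,y*]] are all positive, and the function F(x,y) = Σ_{j=1}^3 m_j* √((x−x_j)² + (y−y_j)²) attains its global minimum at P*, with minimum value F(x*, y*) = det[[1,1,1,1],[x*,x1,x2,x3],[y*,y1,y2,y3],[x*²+y*², x1²+y1², x2²+y2², x3²+y3²]]. -/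

import Mathlib

/-- Cauchy–Schwarz inequality in `ℝ²`, in coordinates. -/
lemma cauchy2' (u v s t : ℝ) : u*s + v*t ≤ Real.sqrt (u^2+v^2) * Real.sqrt (s^2+t^2) := by
  rw [← Real.sqrt_mul (by positivity)]
  rcases le_or_gt (u*s+v*t) 0 with h | h
  · exact h.trans (Real.sqrt_nonneg _)
  · calc u*s+v*t = Real.sqrt ((u*s+v*t)^2) := (Real.sqrt_sq h.le).symm
      _ ≤ _ := Real.sqrt_le_sqrt (by nlinarith [sq_nonneg (u*t - v*s)])

/-- Expansion of the 4×4 determinant as a weighted sum of squared distances. -/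
lemma det4_expand (x1 y1 x2 y2 x3 y3 xs ys : ℝ) :
    Matrix.det !![(1:ℝ), 1, 1, 1; xs, x1, x2, x3; ys, y1, y2, y3;
        xs^2 + ys^2, x1^2 + y1^2, x2^2 + y2^2, x3^2 + y3^2]
    = (x2*y3 - x3*y2 - xs*y3 + x3*ys + xs*y2 - x2*ys) * ((xs-x1)^2+(ys-y1)^2)
    + (xs*y3 - x3*ys - x1*y3 + x3*y1 + x1*ys - xs*y1) * ((xs-x2)^2+(ys-y2)^2)
    + (x2*ys - xs*y2 - x1*ys + xs*y1 + x1*y2 - x2*y1) * ((xs-x3)^2+(ys-y3)^2) := by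
  simp [Matrix.det_succ_row_zero, Fin.sum_univ_succ, Fin.succAbove,
    Fin.castSucc, Fin.castAdd, Fin.castLE]
  ring

/-- Inverse Fermat–Torricelli problem: if `P*` lies strictly inside the
counterclockwise triangle `P1P2P3`, then the weights `m_j*` are all positive
and `F` attains its global minimum at `P*`, with minimum value given by the
4×4 determinant. -/
theorem inverse_problem_minimum
    (x1 y1 x2 y2 x3 y3 xs ys : ℝ)
    (hccw : 0 < Matrix.det !![(1:ℝ), 1, 1; x1, x2, x3; y1, y2, y3])
    (hint : ∃ l1 l2 l3 : ℝ, 0 < l1 ∧ 0 < l2 ∧ 0 < l3 ∧ l1 + l2 + l3 = 1 ∧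
        xs = l1*x1 + l2*x2 + l3*x3 ∧ ys = l1*y1 + l2*y2 + l3*y3)
    (m1 m2 m3 : ℝ)
    (hm1 : m1 = Real.sqrt ((xs-x1)^2 + (ys-y1)^2)
        * Matrix.det !![(1:ℝ), 1, 1; xs, x2, x3; ys, y2, y3])
    (hm2 : m2 = Real.sqrt ((xs-x2)^2 + (ys-y2)^2)
        * Matrix.det !![(1:ℝ), 1, 1; x1, xs, x3; y1, ys, y3])
    (hm3 : m3 = Real.sqrt ((xs-x3)^2 + (ys-y3)^2)
        * Matrix.det !![(1:ℝ), 1, 1; x1, x2, xs; y1, y2, ys])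
    (F : ℝ → ℝ → ℝ)
    (hF : ∀ x y, F x y =
        m1 * Real.sqrt ((x-x1)^2 + (y-y1)^2)
      + m2 * Real.sqrt ((x-x2)^2 + (y-y2)^2)
      + m3 * Real.sqrt ((x-x3)^2 + (y-y3)^2)) :
    0 < m1 ∧ 0 < m2 ∧ 0 < m3 ∧
    (∀ x y : ℝ, F xs ys ≤ F x y) ∧
    F xs ys = Matrix.det !![(1:ℝ), 1, 1, 1; xs, x1, x2, x3; ys, y1, y2, y3;
        xs^2 + ys^2, x1^2 + y1^2, x2^2 + y2^2, x3^2 + y3^2] := by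
  obtain ⟨l1, l2, l3, hl1, hl2, hl3, hsum, hx, hy⟩ := hint
  -- The base determinant as a polynomial
  have hD : Matrix.det !![(1:ℝ), 1, 1; x1, x2, x3; y1, y2, y3]
      = x2*y3 - x3*y2 - x1*y3 + x3*y1 + x1*y2 - x2*y1 := by
    simp [Matrix.det_fin_three]; try ring
  rw [hD] at hccw
  -- the three sub-determinants as polynomials
  have hM1 : Matrix.det !![(1:ℝ), 1, 1; xs, x2, x3; ys, y2, y3]
      = x2*y3 - x3*y2 - xs*y3 + x3*ys + xs*y2 - x2*ys := by
    simp [Matrix.det_fin_three]; try ring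
  have hM2 : Matrix.det !![(1:ℝ), 1, 1; x1, xs, x3; y1, ys, y3]
      = xs*y3 - x3*ys - x1*y3 + x3*y1 + x1*ys - xs*y1 := by
    simp [Matrix.det_fin_three]; try ring
  have hM3 : Matrix.det !![(1:ℝ), 1, 1; x1, x2, xs; y1, y2, ys]
      = x2*ys - xs*y2 - x1*ys + xs*y1 + x1*y2 - x2*y1 := by
    simp [Matrix.det_fin_three]; try ring
  -- barycentric values of the sub-determinants
  have hP1 : x2*y3 - x3*y2 - xs*y3 + x3*ys + xs*y2 - x2*ys
      = l1 * (x2*y3 - x3*y2 - x1*y3 + x3*y1 + x1*y2 - x2*y1) := by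
    linear_combination (y2 - y3)*hx + (x3 - x2)*hy - (x2*y3 - x3*y2)*hsum
  have hP2 : xs*y3 - x3*ys - x1*y3 + x3*y1 + x1*ys - xs*y1
      = l2 * (x2*y3 - x3*y2 - x1*y3 + x3*y1 + x1*y2 - x2*y1) := by
    linear_combination (y3 - y1)*hx + (x1 - x3)*hy - (x3*y1 - x1*y3)*hsum
  have hP3 : x2*ys - xs*y2 - x1*ys + xs*y1 + x1*y2 - x2*y1
      = l3 * (x2*y3 - x3*y2 - x1*y3 + x3*y1 + x1*y2 - x2*y1) := by
    linear_combination (y1 - y2)*hx + (x2 - x1)*hy - (x1*y2 - x2*y1)*hsum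
  -- squared distances from P* to the vertices are positive
  have hne : ∀ a b la lb lc xa ya xb yb xc yc : ℝ, 0 < la → 0 < lb → 0 < lc →
      la + lb + lc = 1 → xs = la*xa + lb*xb + lc*xc → ys = la*ya + lb*yb + lc*yc →
      0 < xb*yc - xc*yb - xa*yc + xc*ya + xa*yb - xb*ya →
      a = xs - xa → b = ys - ya → 0 < a^2 + b^2 := by
    intro a b la lb lc xa ya xb yb xc yc hla hlb hlc hs hxx hyy hDp ha hb
    rcases (eq_or_lt_of_le (by positivity : (0:ℝ) ≤ a^2 + b^2)) with h | h
    · exfalso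
      have ha2 : a^2 = 0 := le_antisymm (by linarith [sq_nonneg b]) (sq_nonneg a)
      have hb2 : b^2 = 0 := le_antisymm (by linarith [sq_nonneg a]) (sq_nonneg b)
      have ha0 : a = 0 := sq_eq_zero_iff.mp ha2
      have hb0 : b = 0 := sq_eq_zero_iff.mp hb2
      have f1 : lb*(xb - xa) + lc*(xc - xa) = 0 := by
        linear_combination ha0 - ha - hxx - xa*hs
      have f2 : lb*(yb - ya) + lc*(yc - ya) = 0 := by
        linear_combination hb0 - hb - hyy - ya*hs
      have hz : lc * (xb*yc - xc*yb - xa*yc + xc*ya + xa*yb - xb*ya) = 0 := by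
        linear_combination (xb - xa)*f2 - (yb - ya)*f1
      linarith [mul_pos hlc hDp, hz]
    · exact h
  have hne1 : 0 < (xs - x1)^2 + (ys - y1)^2 :=
    hne _ _ l1 l2 l3 x1 y1 x2 y2 x3 y3 hl1 hl2 hl3 hsum hx hy hccw rfl rfl
  have hne2 : 0 < (xs - x2)^2 + (ys - y2)^2 :=
    hne _ _ l2 l3 l1 x2 y2 x3 y3 x1 y1 hl2 hl3 hl1 (by linarith)
      (by linear_combination hx) (by linear_combination hy) (by linarith) rfl rfl
  have hne3 : 0 < (xs - x3)^2 + (ys - y3)^2 :=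
    hne _ _ l3 l1 l2 x3 y3 x1 y1 x2 y2 hl3 hl1 hl2 (by linarith)
      (by linear_combination hx) (by linear_combination hy) (by linarith) rfl rfl
  -- rewrite the weights
  have hw1 : 0 < l1 * (x2*y3 - x3*y2 - x1*y3 + x3*y1 + x1*y2 - x2*y1) := mul_pos hl1 hccw
  have hw2 : 0 < l2 * (x2*y3 - x3*y2 - x1*y3 + x3*y1 + x1*y2 - x2*y1) := mul_pos hl2 hccw
  have hw3 : 0 < l3 * (x2*y3 - x3*y2 - x1*y3 + x3*y1 + x1*y2 - x2*y1) := mul_pos hl3 hccw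
  have hm1' : m1 = Real.sqrt ((xs-x1)^2 + (ys-y1)^2)
      * (l1 * (x2*y3 - x3*y2 - x1*y3 + x3*y1 + x1*y2 - x2*y1)) := by rw [hm1, hM1, hP1]
  have hm2' : m2 = Real.sqrt ((xs-x2)^2 + (ys-y2)^2)
      * (l2 * (x2*y3 - x3*y2 - x1*y3 + x3*y1 + x1*y2 - x2*y1)) := by rw [hm2, hM2, hP2]
  have hm3' : m3 = Real.sqrt ((xs-x3)^2 + (ys-y3)^2)
      * (l3 * (x2*y3 - x3*y2 - x1*y3 + x3*y1 + x1*y2 - x2*y1)) := by rw [hm3, hM3, hP3]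
  have hpos1 : 0 < m1 := by rw [hm1']; exact mul_pos (Real.sqrt_pos.mpr hne1) hw1
  have hpos2 : 0 < m2 := by rw [hm2']; exact mul_pos (Real.sqrt_pos.mpr hne2) hw2
  have hpos3 : 0 < m3 := by rw [hm3']; exact mul_pos (Real.sqrt_pos.mpr hne3) hw3
  -- value of F at P*
  have s1 : Real.sqrt ((xs-x1)^2 + (ys-y1)^2) * Real.sqrt ((xs-x1)^2 + (ys-y1)^2)
      = (xs-x1)^2 + (ys-y1)^2 := Real.mul_self_sqrt (by positivity)
  have s2 : Real.sqrt ((xs-x2)^2 + (ys-y2)^2) * Real.sqrt ((xs-x2)^2 + (ys-y2)^2)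
      = (xs-x2)^2 + (ys-y2)^2 := Real.mul_self_sqrt (by positivity)
  have s3 : Real.sqrt ((xs-x3)^2 + (ys-y3)^2) * Real.sqrt ((xs-x3)^2 + (ys-y3)^2)
      = (xs-x3)^2 + (ys-y3)^2 := Real.mul_self_sqrt (by positivity)
  have hFs : F xs ys
      = (l1 * (x2*y3 - x3*y2 - x1*y3 + x3*y1 + x1*y2 - x2*y1)) * ((xs-x1)^2 + (ys-y1)^2)
      + (l2 * (x2*y3 - x3*y2 - x1*y3 + x3*y1 + x1*y2 - x2*y1)) * ((xs-x2)^2 + (ys-y2)^2)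
      + (l3 * (x2*y3 - x3*y2 - x1*y3 + x3*y1 + x1*y2 - x2*y1)) * ((xs-x3)^2 + (ys-y3)^2) := by
    rw [hF, hm1', hm2', hm3']
    linear_combination (l1 * (x2*y3 - x3*y2 - x1*y3 + x3*y1 + x1*y2 - x2*y1)) * s1
      + (l2 * (x2*y3 - x3*y2 - x1*y3 + x3*y1 + x1*y2 - x2*y1)) * s2
      + (l3 * (x2*y3 - x3*y2 - x1*y3 + x3*y1 + x1*y2 - x2*y1)) * s3
  -- gradient conditions
  have hx0 : l1*(xs - x1) + l2*(xs - x2) + l3*(xs - x3) = 0 := by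
    linear_combination xs*hsum + hx
  have hy0 : l1*(ys - y1) + l2*(ys - y2) + l3*(ys - y3) = 0 := by
    linear_combination ys*hsum + hy
  -- global minimality
  have hmin : ∀ x y : ℝ, F xs ys ≤ F x y := by
    intro x y
    rw [hF x y]
    have c1 := mul_le_mul_of_nonneg_left (cauchy2' (xs-x1) (ys-y1) (x-x1) (y-y1)) hw1.le
    have c2 := mul_le_mul_of_nonneg_left (cauchy2' (xs-x2) (ys-y2) (x-x2) (y-y2)) hw2.le
    have c3 := mul_le_mul_of_nonneg_left (cauchy2' (xs-x3) (ys-y3) (x-x3) (y-y3)) hw3.le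
    rw [hm1', hm2', hm3']
    have hlow : (l1 * (x2*y3 - x3*y2 - x1*y3 + x3*y1 + x1*y2 - x2*y1)) * ((xs-x1)*(x-x1)+(ys-y1)*(y-y1))
        + (l2 * (x2*y3 - x3*y2 - x1*y3 + x3*y1 + x1*y2 - x2*y1)) * ((xs-x2)*(x-x2)+(ys-y2)*(y-y2))
        + (l3 * (x2*y3 - x3*y2 - x1*y3 + x3*y1 + x1*y2 - x2*y1)) * ((xs-x3)*(x-x3)+(ys-y3)*(y-y3))
        = F xs ys := by
      rw [hFs]
      linear_combination ((x2*y3 - x3*y2 - x1*y3 + x3*y1 + x1*y2 - x2*y1)*(x - xs))*hx0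
        + ((x2*y3 - x3*y2 - x1*y3 + x3*y1 + x1*y2 - x2*y1)*(y - ys))*hy0
    have e1 : (Real.sqrt ((xs-x1)^2 + (ys-y1)^2) * (l1 * (x2*y3 - x3*y2 - x1*y3 + x3*y1 + x1*y2 - x2*y1)))
        * Real.sqrt ((x-x1)^2 + (y-y1)^2)
        = (l1 * (x2*y3 - x3*y2 - x1*y3 + x3*y1 + x1*y2 - x2*y1))
        * (Real.sqrt ((xs-x1)^2 + (ys-y1)^2) * Real.sqrt ((x-x1)^2 + (y-y1)^2)) := by ring
    have e2 : (Real.sqrt ((xs-x2)^2 + (ys-y2)^2) * (l2 * (x2*y3 - x3*y2 - x1*y3 + x3*y1 + x1*y2 - x2*y1)))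
        * Real.sqrt ((x-x2)^2 + (y-y2)^2)
        = (l2 * (x2*y3 - x3*y2 - x1*y3 + x3*y1 + x1*y2 - x2*y1))
        * (Real.sqrt ((xs-x2)^2 + (ys-y2)^2) * Real.sqrt ((x-x2)^2 + (y-y2)^2)) := by ring
    have e3 : (Real.sqrt ((xs-x3)^2 + (ys-y3)^2) * (l3 * (x2*y3 - x3*y2 - x1*y3 + x3*y1 + x1*y2 - x2*y1)))
        * Real.sqrt ((x-x3)^2 + (y-y3)^2)
        = (l3 * (x2*y3 - x3*y2 - x1*y3 + x3*y1 + x1*y2 - x2*y1))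
        * (Real.sqrt ((xs-x3)^2 + (ys-y3)^2) * Real.sqrt ((x-x3)^2 + (y-y3)^2)) := by ring
    linarith [c1, c2, c3, e1, e2, e3, hlow]
  refine ⟨hpos1, hpos2, hpos3, hmin, ?_⟩
  rw [hFs, det4_expand, hP1, hP2, hP3]
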